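/- For every rational number r > 4 there exist natural numbers ℓ, m, p, q such that 2 ≤ ℓ, 4 ≤ m, ℓ < m, m ≤ ℓ + 2, 1 ≤ p, p < q, and r = ℓ + m + (2 − p − q)/q, where the right-hand side is computed in the rational numbers. -/

import Mathlib

/-- For every rational number `r > 4` there exist natural numbers `ℓ, m, p, q` with
`2 ≤ ℓ`, `4 ≤ m`, `ℓ < m`, `m ≤ ℓ + 2`, `1 ≤ p`, `p < q`, such that
`r = ℓ + m + (2 - p - q)/q` in `ℚ`. -/
theorem stmt_0 (r : ℚ) (hr : 4 < r) :
    ∃ ℓ m p q : ℕ, 2 ≤ ℓ ∧ 4 ≤ m ∧ ℓ < m ∧ m ≤ ℓ + 2 ∧ 1 ≤ p ∧ p < q ∧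
      r = (ℓ : ℚ) + (m : ℚ) + (2 - (p : ℚ) - (q : ℚ)) / (q : ℚ) := by
  have hbpos : 0 < r.den := r.pos
  have hb : (0:ℚ) < (r.den : ℚ) := by exact_mod_cast hbpos
  have hnum : (r.num : ℚ) = r * r.den := by
    exact (Rat.mul_den_eq_num r).symm
  set c : ℤ := ⌈r⌉ with hc
  have hrc : r ≤ (c : ℚ) := Int.le_ceil r
  have hcr : (c : ℚ) < r + 1 := Int.ceil_lt_add_one r
  have hc5 : 5 ≤ c := by
    have h4 : (4:ℤ) < c := by
      rw [hc, Int.lt_ceil]; exact_mod_cast hr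
    omega
  set D : ℤ := c * r.den - r.num with hD
  have hD0 : 0 ≤ D := by
    have : (0:ℚ) ≤ (D : ℚ) := by
      push_cast [hD]
      nlinarith
    exact_mod_cast this
  have hDb : D < r.den := by
    have : (D : ℚ) < (r.den : ℚ) := by
      push_cast [hD]
      nlinarith
    exact_mod_cast this
  have hDcast : ((D.toNat : ℕ) : ℚ) = (D : ℚ) := by
    exact_mod_cast Int.toNat_of_nonneg hD0
  set n : ℕ := c.toNat with hn
  have hnc : (n : ℤ) = c := Int.toNat_of_nonneg (by omega)
  have hn5 : 5 ≤ n := by omega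
  have hncQ : (n : ℚ) = (c : ℚ) := by exact_mod_cast hnc
  -- the key equation, with sum of ℓ and m equal to n + 1
  have key : ∀ ℓ m : ℕ, ℓ + m = n + 1 →
      r = (ℓ : ℚ) + (m : ℚ) + (2 - ((2 + 3 * D.toNat : ℕ) : ℚ) - ((3 * r.den : ℕ) : ℚ))
        / ((3 * r.den : ℕ) : ℚ) := by
    intro ℓ m hℓm
    have hsum : (ℓ : ℚ) + (m : ℚ) = (n : ℚ) + 1 := by exact_mod_cast hℓm
    rw [hsum, hncQ]
    push_cast [hDcast]
    have hDQ : (D : ℚ) = (c : ℚ) * r.den - r.num := by push_cast [hD]; ring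
    field_simp
    nlinarith [hDQ, hnum]
  have hp1 : 1 ≤ 2 + 3 * D.toNat := by omega
  have hpq : 2 + 3 * D.toNat < 3 * r.den := by omega
  rcases Nat.even_or_odd n with ⟨k, hk⟩ | ⟨k, hk⟩
  · exact ⟨k, k + 1, 2 + 3 * D.toNat, 3 * r.den, by omega, by omega, by omega, by omega,
      hp1, hpq, key k (k + 1) (by omega)⟩
  · exact ⟨k, k + 2, 2 + 3 * D.toNat, 3 * r.den, by omega, by omega, by omega, by omega,
      hp1, hpq, key k (k + 2) (by omega)⟩
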